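/- Let g be the strictly upper triangular n × n matrices over ℂ and f ∈ g*. If dim g/g^f = 2 (equivalently the coadjoint orbit of f is two-dimensional), then the support Supp(f) = {(i,j) : f(E_{ij}) ≠ 0} is contained in {(i,j) : 1 ≤ j − i ≤ 2}. -/

import Mathlib

open Matrix
set_option maxHeartbeats 1000000
set_option synthInstance.maxHeartbeats 400000

/-- `g`: the span of the matrix units `E_{rs}`, `r < s`, i.e. the strictly upper triangular
`n × n` complex matrices. -/
noncomputable def gUpper (n : ℕ) : Submodule ℂ (Matrix (Fin n) (Fin n) ℂ) :=
  Submodule.span ℂ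
    {m | ∃ r s : Fin n, r < s ∧ m = Matrix.single r s (1 : ℂ)}

/-- Let `g` be the strictly upper triangular matrices and `f ∈ g*`.  If
`dim g/g^f = 2` (the coadjoint orbit of `f` is two-dimensional), where
`g^f = {x ∈ g : f([x,y]) = 0 ∀ y ∈ g}`, then the support
`Supp(f) = {(r,s) : r < s, f(E_{rs}) ≠ 0}` is contained in
`{(r,s) : 1 ≤ s − r ≤ 2}`. -/
theorem stmt8 (n : ℕ) (f : Matrix (Fin n) (Fin n) ℂ →ₗ[ℂ] ℂ)
    (W : Submodule ℂ (Matrix (Fin n) (Fin n) ℂ))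
    (hW : (W : Set (Matrix (Fin n) (Fin n) ℂ)) =
      {x | x ∈ gUpper n ∧ ∀ y ∈ gUpper n, f (x * y - y * x) = 0})
    (hdim : Module.finrank ℂ (gUpper n) = Module.finrank ℂ W + 2) :
    ∀ r s : Fin n, r < s → f (Matrix.single r s (1 : ℂ)) ≠ 0 →
      (s : ℕ) ≤ (r : ℕ) + 2 := by
  intro r s hrs hf
  by_contra hcon
  push_neg at hcon
  have hsn : (s : ℕ) < n := s.isLt
  set b : Fin n := ⟨(r : ℕ) + 1, by omega⟩ with hbdef
  set a : Fin n := ⟨(s : ℕ) - 1, by omega⟩ with hadef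
  have hrb : r < b := by simp [hbdef, Fin.lt_def]
  have hbs : b < s := by simp [hbdef, Fin.lt_def]; omega
  have hra : r < a := by simp [hadef, Fin.lt_def]; omega
  have has : a < s := by simp [hadef, Fin.lt_def]; omega
  have hba : b < a := by simp [hbdef, hadef, Fin.lt_def]; omega
  -- disequalities
  have nbr : b ≠ r := hrb.ne'
  have nsr : s ≠ r := hrs.ne'
  have nar : a ≠ r := hra.ne'
  have nba : b ≠ a := hba.ne
  have nab : a ≠ b := hba.ne'
  have nsb : s ≠ b := hbs.ne'
  have nsa : s ≠ a := has.ne'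
  -- notation
  set E : Fin n → Fin n → Matrix (Fin n) (Fin n) ℂ :=
    fun i j => Matrix.single i j (1 : ℂ) with hEdef
  have hmul0 : ∀ (i j k l : Fin n), j ≠ k → E i j * E k l = 0 := by
    intro i j k l h
    exact Matrix.single_mul_single_of_ne (c := 1) i j k h 1
  have hmul1 : ∀ (i j k : Fin n), E i j * E j k = E i k := by
    intro i j k
    rw [hEdef]
    simp [Matrix.single_mul_single_same]
  set c : ℂ := f (Matrix.single r s (1 : ℂ)) with hcdef
  have hc : c ≠ 0 := hf
  -- the four test vectors
  set v : Fin 4 → Matrix (Fin n) (Fin n) ℂ := ![E r b, E b s, E r a, E a s] with hvdef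
  have hvmem : ∀ i, v i ∈ gUpper n := by
    intro i
    fin_cases i
    · exact Submodule.subset_span ⟨r, b, hrb, rfl⟩
    · exact Submodule.subset_span ⟨b, s, hbs, rfl⟩
    · exact Submodule.subset_span ⟨r, a, hra, rfl⟩
    · exact Submodule.subset_span ⟨a, s, has, rfl⟩
  -- the linear map x ↦ (f [x, v i])_i
  set ψ : (gUpper n) →ₗ[ℂ] (Fin 4 → ℂ) :=
    LinearMap.pi (fun i => f.comp
      ((LinearMap.mulRight ℂ (v i) - LinearMap.mulLeft ℂ (v i)).comp (gUpper n).subtype))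
    with hψdef
  have hψapp : ∀ (x : gUpper n) (i : Fin 4), ψ x i = f ((x : Matrix (Fin n) (Fin n) ℂ) * v i - v i * x) := by
    intro x i
    simp [hψdef]
  -- W (pulled back to gUpper) is contained in ker ψ
  have hWle : W ≤ gUpper n := by
    intro x hx
    have : x ∈ (W : Set (Matrix (Fin n) (Fin n) ℂ)) := hx
    rw [hW] at this
    exact this.1
  have hker : Submodule.comap (gUpper n).subtype W ≤ LinearMap.ker ψ := by
    intro x hx
    have hx' : (x : Matrix (Fin n) (Fin n) ℂ) ∈ (W : Set (Matrix (Fin n) (Fin n) ℂ)) := hx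
    rw [hW] at hx'
    rw [LinearMap.mem_ker]
    funext i
    rw [hψapp]
    exact hx'.2 (v i) (hvmem i)
  -- ψ is surjective
  have hsurj : Function.Surjective ψ := by
    intro w
    set x₀ : Matrix (Fin n) (Fin n) ℂ :=
      c⁻¹ • (w 1 • v 0 - w 0 • v 1 + w 3 • v 2 - w 2 • v 3) with hx₀def
    have hx₀mem : x₀ ∈ gUpper n := by
      refine Submodule.smul_mem _ _ ?_
      refine Submodule.sub_mem _ (Submodule.add_mem _ (Submodule.sub_mem _ ?_ ?_) ?_) ?_ <;>
        exact Submodule.smul_mem _ _ (hvmem _)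
    refine ⟨⟨x₀, hx₀mem⟩, ?_⟩
    funext i
    rw [hψapp]
    have hv0 : v 0 = E r b := by simp [hvdef]
    have hv1 : v 1 = E b s := by simp [hvdef]
    have hv2 : v 2 = E r a := by simp [hvdef]
    have hv3 : v 3 = E a s := by simp [hvdef]
    have hfE : f (E r s) = c := by rw [hEdef, hcdef]
    fin_cases i <;>
      simp only [Fin.reduceFinMk, hx₀def, hv0, hv1, hv2, hv3, smul_sub, smul_add, smul_smul,
        sub_mul, add_mul, mul_sub, mul_add, smul_mul_assoc, mul_smul_comm,
        hmul0 r b r b nbr, hmul0 r b r a nbr, hmul0 r b a s nba,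
        hmul0 b s r b nsr, hmul0 b s b s nsb, hmul0 b s r a nsr, hmul0 b s a s nsa,
        hmul0 r a r b nar, hmul0 r a b s nab, hmul0 r a r a nar,
        hmul0 a s r b nsr, hmul0 a s b s nsb, hmul0 a s r a nsr, hmul0 a s a s nsa,
        hmul1 r b s, hmul1 r a s, smul_zero, sub_zero, zero_sub, add_zero, zero_add,
        _root_.map_smul, map_sub, map_add, map_neg, map_zero, smul_eq_mul, hfE,
        Matrix.cons_val_zero, Matrix.cons_val_one, Matrix.head_cons, Fin.isValue] <;>
      field_simp
  -- rank-nullity gives the contradiction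
  have hrank : Module.finrank ℂ (LinearMap.range ψ) + Module.finrank ℂ (LinearMap.ker ψ)
      = Module.finrank ℂ (gUpper n) := LinearMap.finrank_range_add_finrank_ker ψ
  have hrtop : LinearMap.range ψ = ⊤ := LinearMap.range_eq_top.mpr hsurj
  have hr4 : Module.finrank ℂ (LinearMap.range ψ) = 4 := by
    rw [hrtop, finrank_top]
    simp
  have hWeq : Module.finrank ℂ W = Module.finrank ℂ (Submodule.comap (gUpper n).subtype W) :=
    (Submodule.comapSubtypeEquivOfLe hWle).finrank_eq.symm
  have hWker : Module.finrank ℂ (Submodule.comap (gUpper n).subtype W)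
      ≤ Module.finrank ℂ (LinearMap.ker ψ) := Submodule.finrank_mono hker
  omega
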